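/- Let Γ = F ⋊_φ ℤ, where F is free with basis B and t is the stable letter. In any t-complete bracketing of a word w that represents the identity in Γ, the content of each bracket is equal in Γ to an element of F. -/

import Mathlib

/-- In any `t`-complete bracketing of a word `w` representing the identity of
`Γ = F ⋊_φ ℤ`, the content of each bracket equals an element of `F` in `Γ`.
Letters of words are pairs in `(B ⊕ Unit) × Bool`, the letter `t` being
`(Sum.inr (), true)` and `t⁻¹` being `(Sum.inr (), false)`; a bracket is recorded by
the pair of positions of its sentinels, its content being the corresponding subword. -/
theorem stmt8 (B : Type) [Fintype B] (φ : MulAut (FreeGroup B))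
    (t : FreeGroup B ⋊[zpowersHom (MulAut (FreeGroup B)) φ] Multiplicative ℤ)
    (ht : t = SemidirectProduct.inr (Multiplicative.ofAdd 1))
    (ev : List ((B ⊕ Unit) × Bool) →
      (FreeGroup B ⋊[zpowersHom (MulAut (FreeGroup B)) φ] Multiplicative ℤ))
    (hev : ev = fun l => FreeGroup.lift
      (Sum.elim (fun b => SemidirectProduct.inl (FreeGroup.of b)) fun _ => t)
      (FreeGroup.mk l))
    (w : List ((B ⊕ Unit) × Bool)) (hw : ev w = 1)
    (S : Finset (ℕ × ℕ))
    (hvalid : ∀ β ∈ S, β.1 ≤ β.2 ∧ β.2 < w.length)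
    (hcompat : ∀ β ∈ S, ∀ β' ∈ S, β ≠ β' →
      β'.2 < β.1 ∨ β.2 < β'.1 ∨ (β.1 ≤ β'.1 ∧ β'.2 ≤ β.2) ∨ (β'.1 ≤ β.1 ∧ β.2 ≤ β'.2))
    (hsent : ∀ β ∈ S,
      (w[β.1]? = some (Sum.inr (), true) ∧ w[β.2]? = some (Sum.inr (), false)) ∨
      (w[β.1]? = some (Sum.inr (), false) ∧ w[β.2]? = some (Sum.inr (), true)))
    (hcover : ∀ (k : ℕ) (p : (B ⊕ Unit) × Bool), w[k]? = some p → p.1 = Sum.inr () →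
      ∃! β : ℕ × ℕ, β ∈ S ∧ (β.1 = k ∨ β.2 = k)) :
    ∀ β ∈ S, ∃ c : FreeGroup B,
      ev ((w.drop β.1).take (β.2 - β.1 + 1)) = SemidirectProduct.inl c := by
  classical
  -- the exponent of a letter
  set e : (B ⊕ Unit) × Bool → ℤ :=
    fun x => Sum.elim (fun _ => (0 : ℤ)) (fun _ => if x.2 then 1 else -1) x.1 with he
  -- the exponent of the letter at a position
  set F : ℕ → ℤ := fun k => (w[k]?).elim 0 e with hF
  -- rightHom ∘ ev is the total exponent
  have hr : ∀ l : List ((B ⊕ Unit) × Bool),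
      SemidirectProduct.rightHom (ev l) = Multiplicative.ofAdd ((l.map e).sum) := by
    intro l
    rw [hev]
    simp only
    rw [FreeGroup.lift_mk, map_list_prod, List.map_map]
    induction l with
    | nil => simp
    | cons x xs ih =>
      rw [List.map_cons, List.prod_cons, List.map_cons, List.sum_cons, ofAdd_add, ih]
      congr 1
      rcases x with ⟨x1, x2⟩
      rcases x1 with b | u <;> rcases x2 <;>
        simp [ht, he, SemidirectProduct.rightHom_inl, SemidirectProduct.rightHom_inr, ofAdd_neg]
  -- sum of exponents over a slice
  have hsum : ∀ (n a : ℕ), (((w.drop a).take n).map e).sum = ∑ i ∈ Finset.range n, F (a + i) := by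
    intro n a
    induction n with
    | zero => simp
    | succ n ih =>
      rw [List.take_succ, List.map_append, List.sum_append, ih, Finset.sum_range_succ]
      congr 1
      have : (w.drop a)[n]? = w[a + n]? := List.getElem?_drop
      rw [this, hF]
      beta_reduce
      cases w[a + n]? <;> simp
  -- brackets have distinct sentinel positions
  have hne : ∀ γ ∈ S, γ.1 ≠ γ.2 := by
    intro γ hγ h
    rcases hsent γ hγ with ⟨h1, h2⟩ | ⟨h1, h2⟩ <;> rw [h, h2] at h1 <;> simp at h1
  -- partner function
  obtain ⟨part, hpart, hpartneg⟩ :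
      ∃ part : ℕ → ℕ,
        (∀ k, (∃ p, w[k]? = some p ∧ p.1 = Sum.inr ()) →
          ∃ T, (T ∈ S ∧ (T.1 = k ∨ T.2 = k)) ∧
            (∀ y, (y ∈ S ∧ (y.1 = k ∨ y.2 = k)) → y = T) ∧
            (if T.1 = k then part k = T.2 else part k = T.1)) ∧
        (∀ k, ¬(∃ p, w[k]? = some p ∧ p.1 = Sum.inr ()) → part k = k) := by
    refine ⟨fun k =>
      if h : ∃ p, w[k]? = some p ∧ p.1 = Sum.inr () then
        (if ((hcover k h.choose h.choose_spec.1 h.choose_spec.2).choose).1 = k then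
          ((hcover k h.choose h.choose_spec.1 h.choose_spec.2).choose).2
        else ((hcover k h.choose h.choose_spec.1 h.choose_spec.2).choose).1)
      else k, fun k hk => ?_, fun k hk => dif_neg hk⟩
    beta_reduce
    refine ⟨(hcover k hk.choose hk.choose_spec.1 hk.choose_spec.2).choose,
      (hcover k hk.choose hk.choose_spec.1 hk.choose_spec.2).choose_spec.1,
      (hcover k hk.choose hk.choose_spec.1 hk.choose_spec.2).choose_spec.2, ?_⟩
    rw [dif_pos hk]
    split <;> rfl
  -- F vanishing characterizes non-t letters
  have hFne : ∀ k, F k ≠ 0 → ∃ p, w[k]? = some p ∧ p.1 = Sum.inr () := by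
    intro k hk
    simp only [hF] at hk
    cases hp : w[k]? with
    | none => rw [hp] at hk; simp at hk
    | some p =>
      refine ⟨p, rfl, ?_⟩
      rw [hp] at hk
      rcases p with ⟨x1, x2⟩
      rcases x1 with b | u
      · simp [he] at hk
      · rfl
  have hF0 : ∀ k, F k = 0 → part k = k := by
    intro k hk
    apply hpartneg
    rintro ⟨p, hp, hp1⟩
    simp only [hF, hp] at hk
    rcases p with ⟨x1, x2⟩
    cases x1 with
    | inl b => simp at hp1
    | inr u => rcases x2 <;> simp [he] at hk
  -- F at sentinel positions
  have hFsent : ∀ γ ∈ S, F γ.1 + F γ.2 = 0 ∧ F γ.1 ≠ 0 ∧ F γ.2 ≠ 0 := by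
    intro γ hγ
    rcases hsent γ hγ with ⟨h1, h2⟩ | ⟨h1, h2⟩ <;> simp [hF, h1, h2, he]
  intro β hβ
  obtain ⟨hab, hbl⟩ := hvalid β hβ
  -- the main combinatorial facts about the partner function within the bracket β
  have main : ∀ k, β.1 ≤ k → k ≤ β.2 → F k ≠ 0 →
      F k + F (part k) = 0 ∧ β.1 ≤ part k ∧ part k ≤ β.2 ∧ part k ≠ k ∧ part (part k) = k := by
    intro k hk1 hk2 hFk
    obtain ⟨T, ⟨TS, Tk⟩, Tuniq, Tpart⟩ := hpart k (hFne k hFk)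
    have hT12 : T.1 ≠ T.2 := hne T TS
    have hTv := hvalid T TS
    have hpk : (T.1 = k ∧ part k = T.2) ∨ (T.1 ≠ k ∧ T.2 = k ∧ part k = T.1) := by
      by_cases h : T.1 = k
      · left; exact ⟨h, by rwa [if_pos h] at Tpart⟩
      · right; exact ⟨h, Tk.resolve_left h, by rwa [if_neg h] at Tpart⟩
    obtain ⟨hTsum, hT1ne, hT2ne⟩ := hFsent T TS
    have h1 : F k + F (part k) = 0 := by
      rcases hpk with ⟨h, h'⟩ | ⟨_, h, h'⟩
      · rw [h', ← h]; exact hTsum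
      · rw [h', ← h]; omega
    -- both sentinels of T are inside [β.1, β.2]
    have hin : β.1 ≤ T.1 ∧ T.2 ≤ β.2 := by
      by_cases hTβ : T = β
      · subst hTβ; omega
      · rcases hcompat β hβ T TS (fun h => hTβ h.symm) with h | h | h | h
        · omega
        · omega
        · exact h
        · -- β is nested in T: then k is an endpoint of β, so β = T, contradiction
          exfalso
          rcases Tk with hT | hT
          · have : β.1 = k := by omega
            exact hTβ (Tuniq β ⟨hβ, Or.inl this⟩).symm
          · have : β.2 = k := by omega
            exact hTβ (Tuniq β ⟨hβ, Or.inr this⟩).symm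
    have h2 : β.1 ≤ part k ∧ part k ≤ β.2 := by rcases hpk with ⟨_, h'⟩ | ⟨_, _, h'⟩ <;> omega
    have h3 : part k ≠ k := by rcases hpk with ⟨h, h'⟩ | ⟨_, h, h'⟩ <;> omega
    -- involution
    have h4 : part (part k) = k := by
      have hm : ∃ q, w[part k]? = some q ∧ q.1 = Sum.inr () := by
        apply hFne
        intro h0
        rw [h0, add_zero] at h1
        exact hFk h1
      obtain ⟨T', ⟨T'S, T'k⟩, T'uniq, T'part⟩ := hpart (part k) hm
      have hTT' : T = T' := by
        apply T'uniq
        refine ⟨TS, ?_⟩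
        rcases hpk with ⟨_, h'⟩ | ⟨_, _, h'⟩
        · exact Or.inr h'.symm
        · exact Or.inl h'.symm
      subst hTT'
      rcases hpk with ⟨h, h'⟩ | ⟨hne1, h, h'⟩
      · have : T.1 ≠ part k := by omega
        rw [if_neg this] at T'part
        omega
      · have : T.1 = part k := h'.symm
        rw [if_pos this] at T'part
        omega
    exact ⟨h1, h2.1, h2.2, h3, h4⟩
  -- the total exponent of the content is zero
  have key : (∑ i ∈ Finset.range (β.2 - β.1 + 1), F (β.1 + i)) = 0 := by
    apply Finset.sum_involution (fun i _ => part (β.1 + i) - β.1)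
    · intro i hi
      rw [Finset.mem_range] at hi
      by_cases h : F (β.1 + i) = 0
      · rw [hF0 _ h, Nat.add_sub_cancel_left]
        omega
      · obtain ⟨h1, h2, _, _, _⟩ := main (β.1 + i) (by omega) (by omega) h
        rwa [Nat.add_sub_cancel' h2]
    · intro i hi h
      rw [Finset.mem_range] at hi
      obtain ⟨_, h2, _, h4, _⟩ := main (β.1 + i) (by omega) (by omega) h
      omega
    · intro i hi
      rw [Finset.mem_range] at hi ⊢
      by_cases h : F (β.1 + i) = 0
      · rw [hF0 _ h]; omega
      · obtain ⟨_, h2, h3, _, _⟩ := main (β.1 + i) (by omega) (by omega) h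
        omega
    · intro i hi
      rw [Finset.mem_range] at hi
      by_cases h : F (β.1 + i) = 0
      · rw [hF0 _ h, Nat.add_sub_cancel_left, hF0 _ h]
        omega
      · obtain ⟨_, h2, _, _, h5⟩ := main (β.1 + i) (by omega) (by omega) h
        rw [Nat.add_sub_cancel' h2, h5]
        omega
  -- conclude
  have hright : SemidirectProduct.rightHom (ev ((w.drop β.1).take (β.2 - β.1 + 1))) = 1 := by
    rw [hr, hsum, key]
    rfl
  refine ⟨(ev ((w.drop β.1).take (β.2 - β.1 + 1))).left, ?_⟩
  ext
  · rfl
  · rw [SemidirectProduct.right_inl]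
    exact hright
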